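/- Let X, X', Y be independent, X and X' with density f and distribution function F, and Y with density f(·−θ); let k be a kernel symmetric about the origin with ∫ k = 1, ∫ t^2|k(t)|dt < ∞, and K(t) = ∫_{-∞}^t k(u)du. If f is continuously differentiable with bounded derivative, then as h → 0, E[ K((X−Y)/h) K((X'−Y)/h) ] = ∫_{-∞}^∞ (1−F(y))^2 f(y−θ) dy + O(h^2). -/

import Mathlib

open MeasureTheory ProbabilityTheory Filter Asymptotics Set
open scoped Topology ENNReal NNReal BigOperators

noncomputable section

/-- The `k`-th order statistic (1-indexed) of a finite sample: the smallest point `x`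
such that at least `k` of the observations are `≤ x`. -/
def orderStat {N : ℕ} (w : Fin N → ℝ) (k : ℕ) : ℝ :=
  sInf {x : ℝ | k ≤ (Finset.univ.filter fun i => w i ≤ x).card}

/-- The sample median: the `((N+1)/2)`-th order statistic for odd `N`, the average of the
`(N/2)`-th and `(N/2+1)`-th order statistics for even `N`. -/
def sampleMedian {N : ℕ} (w : Fin N → ℝ) : ℝ :=
  if N % 2 = 1 then orderStat w ((N + 1) / 2)
  else (orderStat w (N / 2) + orderStat w (N / 2 + 1)) / 2

/-- The measure on `ℝ` with Lebesgue density `f`. -/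
def densMeasure (f : ℝ → ℝ) : Measure ℝ :=
  MeasureTheory.volume.withDensity fun x => ENNReal.ofReal (f x)

/-- Joint law of the two independent samples: `X_1, …, X_m` i.i.d. with density `f`
and `Y_1, …, Y_n` i.i.d. with density `f(· - θ)`, all independent. -/
def twoSampleLaw (f : ℝ → ℝ) (m n : ℕ) (θ : ℝ) :
    Measure ((Fin m → ℝ) × (Fin n → ℝ)) :=
  (Measure.pi fun _ : Fin m => densMeasure f).prod
    (Measure.pi fun _ : Fin n => (densMeasure f).map (· + θ))

/-- Integrated kernel `K(t) = ∫_{-∞}^t k(u) du`. -/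
def Kfun (k : ℝ → ℝ) (t : ℝ) : ℝ := ∫ u in Set.Iic t, k u

/-- The median test statistic `M† = ∑_{i=1}^m ψ*(Z - X_i)` with `ψ*(x) = 1` for `x > 0`. -/
def MdagStat {m n : ℕ} (p : (Fin m → ℝ) × (Fin n → ℝ)) : ℝ :=
  ∑ i : Fin m, if 0 < sampleMedian (Fin.append p.1 p.2) - p.1 i then (1:ℝ) else 0

/-- The smoothed median test statistic `M̃ = ∑_{i=1}^m K*((Z - X_i)/h)`. -/
def MtilStat (kstar : ℝ → ℝ) (h : ℝ) {m n : ℕ} (p : (Fin m → ℝ) × (Fin n → ℝ)) : ℝ :=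
  ∑ i : Fin m, Kfun kstar ((sampleMedian (Fin.append p.1 p.2) - p.1 i) / h)

/-- The Wilcoxon rank sum statistic `W₂ = ∑_i ∑_j ψ(Y_j - X_i)` with `ψ(x) = 1` for `x ≥ 0`. -/
def W2Stat {m n : ℕ} (p : (Fin m → ℝ) × (Fin n → ℝ)) : ℝ :=
  ∑ i : Fin m, ∑ j : Fin n, if 0 ≤ p.2 j - p.1 i then (1:ℝ) else 0

/-- The smoothed Wilcoxon statistic `W̃₂ = ∑_i ∑_j K((Y_j - X_i)/h)`. -/
def WtilStat (k : ℝ → ℝ) (h : ℝ) {m n : ℕ} (p : (Fin m → ℝ) × (Fin n → ℝ)) : ℝ :=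
  ∑ i : Fin m, ∑ j : Fin n, Kfun k ((p.2 j - p.1 i) / h)

/-- The standard normal distribution function `Φ`. -/
def stdGaussCDF (x : ℝ) : ℝ :=
  ((ProbabilityTheory.gaussianReal 0 1) (Set.Iic x)).toReal

/-- The Beta function `B(a,b) = ∫_0^1 t^{a-1} (1-t)^{b-1} dt`. -/
def Beta (a b : ℝ) : ℝ := ∫ t in Set.Ioo (0:ℝ) 1, t ^ (a - 1) * (1 - t) ^ (b - 1)

lemma Kfun_cont {k : ℝ → ℝ} (hk : Integrable k) : Continuous (Kfun k) := by
  have h0 : ∀ t, Kfun k t = (∫ u in Set.Iic (0:ℝ), k u) + ∫ u in (0:ℝ)..t, k u := by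
    intro t
    have := intervalIntegral.integral_Iic_sub_Iic (hk.integrableOn (s := Set.Iic 0)) (hk.integrableOn (s := Set.Iic t))
    unfold Kfun; linarith
  have : Kfun k = fun t => (∫ u in Set.Iic (0:ℝ), k u) + ∫ u in (0:ℝ)..t, k u := funext h0
  rw [this]
  have hc : Continuous fun t : ℝ => ∫ u in (0:ℝ)..t, k u := hk.continuous_primitive 0
  exact continuous_const.add hc

lemma Kfun_bound {k : ℝ → ℝ} (hk : Integrable k) (t : ℝ) : |Kfun k t| ≤ ∫ u, |k u| := by
  have h1 : ‖∫ u in Set.Iic t, k u‖ ≤ ∫ u in Set.Iic t, ‖k u‖ := norm_integral_le_integral_norm k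
  simp only [Real.norm_eq_abs] at h1
  exact h1.trans (setIntegral_le_integral hk.abs (Filter.Eventually.of_forall fun x => abs_nonneg _))

lemma moment1 {k : ℝ → ℝ} (hk : Integrable k) (hk2 : Integrable fun t => t ^ 2 * |k t|)
    (hksym : ∀ t, k (-t) = k t) : ∫ u, u * k u = 0 := by
  have hint : Integrable fun u => u * k u := by
    refine (hk.abs.add hk2).mono' (aestronglyMeasurable_id.mul hk.aestronglyMeasurable)
      (Filter.Eventually.of_forall fun u => ?_)
    have h1 : |u| ≤ 1 + u ^ 2 := by nlinarith [sq_nonneg (|u| - 1), sq_abs u]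
    have : ‖u * k u‖ = |u| * |k u| := abs_mul u (k u)
    rw [this]
    show |u| * |k u| ≤ |k u| + u ^ 2 * |k u|
    nlinarith [abs_nonneg (k u), abs_nonneg u, sq_nonneg u]
  have hodd : ∫ u, u * k u = - ∫ u, u * k u := by
    conv_lhs => rw [← integral_neg_eq_self (fun u => u * k u) volume]
    simp only [hksym, neg_mul]
    rw [integral_neg]
  linarith [hodd]

lemma taylorF {f F : ℝ → ℝ} (hfC : ContDiff ℝ 1 f) {C : ℝ} (hC : 0 ≤ C)
    (hfd : ∀ x, |deriv f x| ≤ C) (hfint : Integrable f)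
    (hF : ∀ x, F x = ∫ t in Set.Iic x, f t) (y s : ℝ) :
    |F (y + s) - F y - s * f y| ≤ C * s ^ 2 := by
  have hlip : LipschitzWith C.toNNReal f := by
    apply lipschitzWith_of_nnnorm_deriv_le (hfC.differentiable one_ne_zero)
    intro x
    rw [← NNReal.coe_le_coe, coe_nnnorm, Real.norm_eq_abs, Real.coe_toNNReal C hC]
    exact hfd x
  have h1 : F (y + s) - F y = ∫ t in y..(y + s), f t := by
    rw [hF, hF]
    exact intervalIntegral.integral_Iic_sub_Iic hfint.integrableOn hfint.integrableOn
  have h2 : s * f y = ∫ _t in y..(y + s), f y := by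
    rw [intervalIntegral.integral_const, smul_eq_mul]; ring
  have h3 : F (y + s) - F y - s * f y = ∫ t in y..(y + s), (f t - f y) := by
    rw [intervalIntegral.integral_sub hfint.intervalIntegrable intervalIntegrable_const, ← h1, h2]
  rw [h3]
  have hb : ∀ t ∈ Set.uIoc y (y + s), ‖f t - f y‖ ≤ C * |s| := by
    intro t ht
    have hd := hlip.dist_le_mul t y
    rw [Real.dist_eq, Real.dist_eq, Real.coe_toNNReal C hC] at hd
    have hts : |t - y| ≤ |s| := by
      rcases Set.mem_uIoc.mp ht with h | h
      · rw [abs_of_pos (by linarith), abs_of_nonneg (by linarith : (0:ℝ) ≤ s)]; linarith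
      · rw [abs_of_nonpos (by linarith)]
        calc -(t - y) ≤ -s := by linarith
        _ ≤ |s| := neg_le_abs s
    calc ‖f t - f y‖ ≤ C * |t - y| := hd
    _ ≤ C * |s| := by nlinarith [abs_nonneg (t - y)]
  have := intervalIntegral.norm_integral_le_of_norm_le_const hb
  rw [show y + s - y = s by ring] at this
  calc |∫ t in y..(y + s), (f t - f y)| ≤ C * |s| * |s| := this
  _ = C * s ^ 2 := by rw [mul_assoc, ← abs_mul, ← sq, abs_of_nonneg (sq_nonneg s)]

lemma ukint {k : ℝ → ℝ} (hk : Integrable k) (hk2 : Integrable fun t => t ^ 2 * |k t|) :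
    Integrable fun u => u * k u := by
  refine (hk.abs.add hk2).mono' (aestronglyMeasurable_id.mul hk.aestronglyMeasurable)
    (Filter.Eventually.of_forall fun u => ?_)
  have h1 : |u| ≤ 1 + u ^ 2 := by nlinarith [sq_nonneg (|u| - 1), sq_abs u]
  have h2 : ‖u * k u‖ = |u| * |k u| := abs_mul u (k u)
  rw [h2]
  show |u| * |k u| ≤ |k u| + u ^ 2 * |k u|
  nlinarith [abs_nonneg (k u), abs_nonneg u, sq_nonneg u]

lemma Gest {f F k : ℝ → ℝ} (hfC : ContDiff ℝ 1 f) {C : ℝ} (hC : 0 ≤ C)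
    (hfd : ∀ x, |deriv f x| ≤ C) (hfint : Integrable f)
    (hF : ∀ x, F x = ∫ t in Set.Iic x, f t)
    (hk : Integrable k) (hk1 : ∫ t, k t = 1)
    (hk2 : Integrable fun t => t ^ 2 * |k t|) (hksym : ∀ t, k (-t) = k t)
    (h y : ℝ) :
    |(∫ u, k u * (1 - F (y + h * u))) - (1 - F y)| ≤ (C * ∫ u, u ^ 2 * |k u|) * h ^ 2 := by
  have hFcont : Continuous F := by
    have : F = Kfun f := funext hF
    rw [this]; exact Kfun_cont hfint
  set r : ℝ → ℝ := fun u => k u * (F (y + h * u) - F y - (h * u) * f y) with hr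
  have hptb : ∀ u, ‖r u‖ ≤ C * h ^ 2 * (u ^ 2 * |k u|) := by
    intro u
    have ht : |F (y + h * u) - F y - (h * u) * f y| ≤ C * (h * u) ^ 2 :=
      taylorF hfC hC hfd hfint hF y (h * u)
    have he : ‖r u‖ = |k u| * |F (y + h * u) - F y - (h * u) * f y| := abs_mul _ _
    rw [he]
    calc |k u| * |F (y + h * u) - F y - (h * u) * f y| ≤ |k u| * (C * (h * u) ^ 2) :=
          mul_le_mul_of_nonneg_left ht (abs_nonneg _)
    _ = C * h ^ 2 * (u ^ 2 * |k u|) := by ring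
  have hcont2 : Continuous fun u : ℝ => F (y + h * u) - F y - h * u * f y :=
    ((hFcont.comp (continuous_const.add (continuous_const.mul continuous_id))).sub
      continuous_const).sub ((continuous_const.mul continuous_id).mul continuous_const)
  have hrint : Integrable r :=
    (hk2.const_mul (C * h ^ 2)).mono'
      (hk.aestronglyMeasurable.mul hcont2.aestronglyMeasurable)
      (Filter.Eventually.of_forall hptb)
  have huk := ukint hk hk2
  have hid : ∀ u, k u * (1 - F (y + h * u))
      = k u * (1 - F y) - (f y * h) * (u * k u) - r u := by
    intro u; simp only [hr]; ring
  have A1 : Integrable (fun u => k u * (1 - F y) - (f y * h) * (u * k u)) :=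
    (hk.mul_const _).sub (huk.const_mul _)
  have hsum : (∫ u, k u * (1 - F (y + h * u)))
      = (∫ u, k u * (1 - F y) - (f y * h) * (u * k u)) - ∫ u, r u := by
    simp only [hid]
    exact integral_sub A1 hrint
  have hsum2 : (∫ u, k u * (1 - F y) - (f y * h) * (u * k u))
      = (∫ u, k u * (1 - F y)) - (∫ u, (f y * h) * (u * k u)) :=
    integral_sub (hk.mul_const _) (huk.const_mul _)
  have e1 : (∫ u, k u * (1 - F y)) = 1 - F y := by
    rw [integral_mul_const, hk1, one_mul]
  have e2 : (∫ u, (f y * h) * (u * k u)) = 0 := by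
    rw [integral_const_mul, moment1 hk hk2 hksym, mul_zero]
  rw [hsum, hsum2, e1, e2, sub_zero]
  have hrw : (1 - F y - ∫ u, r u) - (1 - F y) = -(∫ u, r u) := by ring
  rw [hrw, abs_neg]
  have hb : ‖∫ u, r u‖ ≤ ∫ u, C * h ^ 2 * (u ^ 2 * |k u|) :=
    norm_integral_le_of_norm_le (hk2.const_mul (C * h ^ 2)) (Filter.Eventually.of_forall hptb)
  rw [Real.norm_eq_abs] at hb
  calc |∫ u, r u| ≤ ∫ u, C * h ^ 2 * (u ^ 2 * |k u|) := hb
  _ = (C * ∫ u, u ^ 2 * |k u|) * h ^ 2 := by rw [integral_const_mul]; ring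

lemma conv_eq {f k : ℝ → ℝ} (hfc : Continuous f) (hfint : Integrable f)
    (hk : Integrable k) {h : ℝ} (hh : 0 < h) (y : ℝ) :
    ∫ x, f x * Kfun k ((x - y) / h) = ∫ u, k u * ∫ x in Set.Ici (y + h * u), f x := by
  have hS : MeasurableSet {p : ℝ × ℝ | p.2 ≤ (p.1 - y) / h} := by
    have hcl : IsClosed {p : ℝ × ℝ | p.2 ≤ (p.1 - y) / h} :=
      isClosed_le continuous_snd (by continuity)
    exact hcl.measurableSet
  have hΦint : Integrable (fun p : ℝ × ℝ => f p.1 * (Set.Iic ((p.1 - y) / h)).indicator k p.2)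
      (volume.prod volume) := by
    have h1 : Integrable (fun p : ℝ × ℝ => f p.1 * k p.2) (volume.prod volume) :=
      hfint.mul_prod hk
    refine (h1.indicator hS).congr (Filter.Eventually.of_forall fun p => ?_)
    simp only [Set.indicator_apply, Set.mem_setOf_eq, Set.mem_Iic]
    by_cases hp : p.2 ≤ (p.1 - y) / h
    · simp [hp]
    · simp [hp]
  have step1 : ∀ x, f x * Kfun k ((x - y) / h)
      = ∫ u, f x * (Set.Iic ((x - y) / h)).indicator k u := by
    intro x
    rw [integral_const_mul, integral_indicator measurableSet_Iic]
    rfl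
  have hsw := integral_integral_swap
    (f := fun x u => f x * (Set.Iic ((x - y) / h)).indicator k u) hΦint
  have step2 : ∀ u, (∫ x, f x * (Set.Iic ((x - y) / h)).indicator k u)
      = k u * ∫ x in Set.Ici (y + h * u), f x := by
    intro u
    have hiff : ∀ x : ℝ, (u ≤ (x - y) / h) ↔ (y + h * u ≤ x) := fun x => by
      rw [le_div_iff₀ hh]
      constructor <;> intro hx <;> nlinarith
    have heq : (fun x => f x * (Set.Iic ((x - y) / h)).indicator k u)
        = fun x => (Set.Ici (y + h * u)).indicator (fun x => f x * k u) x := by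
      funext x
      simp only [Set.indicator_apply, Set.mem_Iic, Set.mem_Ici]
      by_cases hx : y + h * u ≤ x
      · simp [hx, (hiff x).mpr hx]
      · have : ¬ u ≤ (x - y) / h := fun hc => hx ((hiff x).mp hc)
        simp [hx, this]
    rw [heq, integral_indicator measurableSet_Ici, integral_mul_const, mul_comm]
  simp only [step1]
  rw [hsw]
  exact integral_congr_ae (Filter.Eventually.of_forall step2)

/-- For independent `X, X'` (density `f`) and `Y` (density `f(· - θ)`),
as `h → 0⁺`, `E[K((X-Y)/h) K((X'-Y)/h)] = ∫ (1-F(y))² f(y-θ) dy + O(h²)`. -/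
theorem stmt_13
    (f : ℝ → ℝ) (hf0 : ∀ x, 0 ≤ f x) (hfi : ∫ x, f x = 1)
    (F : ℝ → ℝ) (hF : ∀ x, F x = ∫ t in Set.Iic x, f t)
    (hfC : ContDiff ℝ 1 f) (hfd : ∃ C, ∀ x, |deriv f x| ≤ C)
    (k : ℝ → ℝ) (hksym : ∀ t, k (-t) = k t) (hkInt : Integrable k) (hk1 : ∫ t, k t = 1)
    (hk2 : Integrable fun t => t ^ 2 * |k t|) (θ : ℝ) :
    (fun h : ℝ => (∫ p : (ℝ × ℝ) × ℝ,
          Kfun k ((p.1.1 - p.2) / h) * Kfun k ((p.1.2 - p.2) / h)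
          ∂(((densMeasure f).prod (densMeasure f)).prod ((densMeasure f).map (· + θ))))
        - ∫ y, (1 - F y) ^ 2 * f (y - θ)) =O[𝓝[>] (0:ℝ)] fun h : ℝ => h ^ 2 := by
  classical
  have hfcont : Continuous f := hfC.continuous
  have hfint : Integrable f := by
    by_contra hcon
    rw [integral_undef hcon] at hfi; norm_num at hfi
  obtain ⟨C₀, hC₀⟩ := hfd
  set C := max C₀ 0 with hCdef
  have hC : 0 ≤ C := le_max_right _ _
  have hCb : ∀ x, |deriv f x| ≤ C := fun x => (hC₀ x).trans (le_max_left _ _)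
  set A := ∫ u, |k u| with hA
  set I₂ := ∫ u, u ^ 2 * |k u| with hI₂
  have hA0 : 0 ≤ A := integral_nonneg fun u => abs_nonneg _
  have hI₂0 : 0 ≤ I₂ := integral_nonneg fun u => mul_nonneg (sq_nonneg _) (abs_nonneg _)
  have Kc : Continuous (Kfun k) := Kfun_cont hkInt
  have Kb : ∀ t, |Kfun k t| ≤ A := Kfun_bound hkInt
  have hFcont : Continuous F := by
    have : F = Kfun f := funext hF
    rw [this]; exact Kfun_cont hfint
  have hF0 : ∀ x, 0 ≤ F x := fun x => by
    rw [hF]; exact setIntegral_nonneg measurableSet_Iic fun t _ => hf0 t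
  have hF1 : ∀ x, F x ≤ 1 := fun x => by
    rw [hF, ← hfi]
    exact setIntegral_le_integral hfint (Filter.Eventually.of_forall hf0)
  set μ := densMeasure f with hμdef
  have hint_μ : ∀ g : ℝ → ℝ, ∫ x, g x ∂μ = ∫ x, f x * g x := by
    intro g
    have hμd : μ = volume.withDensity fun x => ((fun x => (f x).toNNReal) x : ℝ≥0∞) := rfl
    rw [hμd, integral_withDensity_eq_integral_smul (hfcont.measurable.real_toNNReal) g]
    congr 1; funext x
    rw [NNReal.smul_def, smul_eq_mul, Real.coe_toNNReal _ (hf0 x)]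
  have hμprob : IsProbabilityMeasure μ := by
    constructor
    have hμd : μ = volume.withDensity fun x => ENNReal.ofReal (f x) := rfl
    rw [hμd, withDensity_apply _ MeasurableSet.univ, Measure.restrict_univ,
      ← ofReal_integral_eq_lintegral_ofReal hfint (Filter.Eventually.of_forall hf0), hfi,
      ENNReal.ofReal_one]
  set ν := μ.map (· + θ) with hνdef
  have hνprob : IsProbabilityMeasure ν :=
    Measure.isProbabilityMeasure_map (measurable_add_const θ).aemeasurable
  have hint_ν : ∀ g : ℝ → ℝ, AEStronglyMeasurable g ν →
      ∫ y, g y ∂ν = ∫ x, g (x + θ) ∂μ := fun g hg =>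
    integral_map (measurable_add_const θ).aemeasurable hg
  set G : ℝ → ℝ → ℝ := fun h y => ∫ u, k u * (1 - F (y + h * u)) with hGdef
  have hGb : ∀ h y, |G h y| ≤ A := by
    intro h y
    have hpt : ∀ u, ‖k u * (1 - F (y + h * u))‖ ≤ |k u| := by
      intro u
      rw [show ‖k u * (1 - F (y + h * u))‖ = |k u| * |1 - F (y + h * u)| from abs_mul _ _]
      have h2 : |1 - F (y + h * u)| ≤ 1 := by
        rw [abs_le]
        constructor
        · linarith [hF1 (y + h * u)]
        · linarith [hF0 (y + h * u)]
      nlinarith [abs_nonneg (k u)]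
    have hb := norm_integral_le_of_norm_le hkInt.abs (Filter.Eventually.of_forall hpt)
    rw [Real.norm_eq_abs] at hb
    exact hb
  have hGest : ∀ h y, |G h y - (1 - F y)| ≤ (C * I₂) * h ^ 2 := fun h y =>
    Gest hfC hC hCb hfint hF hkInt hk1 hk2 hksym h y
  -- continuity of (1 - F ·)^2
  have hF2cont : Continuous fun y => (1 - F y) ^ 2 :=
    ((continuous_const.sub hFcont).pow 2)
  have hF2int : Integrable (fun y => (1 - F y) ^ 2) ν := by
    refine (integrable_const (1:ℝ)).mono' hF2cont.aestronglyMeasurable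
      (Filter.Eventually.of_forall fun y => ?_)
    have := hF0 y; have := hF1 y
    rw [Real.norm_eq_abs, abs_of_nonneg (sq_nonneg _)]
    nlinarith
  -- the target L as ν-integral
  have hL : (∫ y, (1 - F y) ^ 2 * f (y - θ)) = ∫ y, (1 - F y) ^ 2 ∂ν := by
    rw [hint_ν _ hF2cont.aestronglyMeasurable, hint_μ]
    have hshift := integral_add_right_eq_self (μ := volume)
      (fun y => (1 - F y) ^ 2 * f (y - θ)) θ
    rw [← hshift]
    congr 1; funext x
    rw [add_sub_cancel_right]; ring
  rw [isBigO_iff]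
  refine ⟨(C * I₂) * (A + 1), eventually_nhdsWithin_of_forall fun h hh => ?_⟩
  have hh : (0:ℝ) < h := hh
  -- Fubini for the big integral
  set Φ : (ℝ × ℝ) × ℝ → ℝ := fun p =>
    Kfun k ((p.1.1 - p.2) / h) * Kfun k ((p.1.2 - p.2) / h) with hΦdef
  have hc1 : Continuous fun p : (ℝ × ℝ) × ℝ => (p.1.1 - p.2) / h :=
    ((continuous_fst.comp continuous_fst).sub continuous_snd).div_const h
  have hc2 : Continuous fun p : (ℝ × ℝ) × ℝ => (p.1.2 - p.2) / h :=
    ((continuous_snd.comp continuous_fst).sub continuous_snd).div_const h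
  have hΦcont : Continuous Φ := (Kc.comp hc1).mul (Kc.comp hc2)
  have hΦint : Integrable Φ ((μ.prod μ).prod ν) := by
    refine (integrable_const (A * A)).mono' hΦcont.aestronglyMeasurable
      (Filter.Eventually.of_forall fun p => ?_)
    have h1 : ‖Φ p‖ = |Kfun k ((p.1.1 - p.2) / h)| * |Kfun k ((p.1.2 - p.2) / h)| := abs_mul _ _
    rw [h1]
    exact mul_le_mul (Kb _) (Kb _) (abs_nonneg _) hA0
  have F1 : (∫ p, Φ p ∂((μ.prod μ).prod ν))
      = ∫ z, ∫ y, Φ (z, y) ∂ν ∂(μ.prod μ) := integral_prod _ hΦint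
  have F2 : (∫ z, ∫ y, Φ (z, y) ∂ν ∂(μ.prod μ))
      = ∫ y, ∫ z, Φ (z, y) ∂(μ.prod μ) ∂ν :=
    integral_integral_swap hΦint
  have F4 : ∀ y, (∫ x, Kfun k ((x - y) / h) ∂μ) = G h y := by
    intro y
    rw [hint_μ, conv_eq hfcont hfint hkInt hh y]
    refine integral_congr_ae (Filter.Eventually.of_forall fun u => ?_)
    show k u * (∫ x in Set.Ici (y + h * u), f x) = k u * (1 - F (y + h * u))
    have hIci : (∫ x in Set.Ici (y + h * u), f x) = 1 - F (y + h * u) := by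
      rw [integral_Ici_eq_integral_Ioi]
      have hsplit := intervalIntegral.integral_Iic_add_Ioi (b := y + h * u)
        hfint.integrableOn hfint.integrableOn
      rw [hfi, ← hF] at hsplit
      linarith
    rw [hIci]
  have F3 : ∀ y, (∫ z, Φ (z, y) ∂(μ.prod μ)) = (G h y) ^ 2 := by
    intro y
    have : (∫ z, Φ (z, y) ∂(μ.prod μ))
        = (∫ x, Kfun k ((x - y) / h) ∂μ) * (∫ x, Kfun k ((x - y) / h) ∂μ) :=
      integral_prod_mul (fun x => Kfun k ((x - y) / h)) (fun x => Kfun k ((x - y) / h))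
    rw [this, F4, sq]
  have hGsqInt : Integrable (fun y => (G h y) ^ 2) ν := by
    have := hΦint.integral_prod_right
    exact this.congr (Filter.Eventually.of_forall fun y => F3 y)
  have Ieq : (∫ p, Φ p ∂((μ.prod μ).prod ν)) = ∫ y, (G h y) ^ 2 ∂ν := by
    rw [F1, F2]
    exact integral_congr_ae (Filter.Eventually.of_forall F3)
  rw [Ieq, hL, ← integral_sub hGsqInt hF2int]
  have hbound : ∀ y, ‖(G h y) ^ 2 - (1 - F y) ^ 2‖ ≤ (C * I₂) * (A + 1) * h ^ 2 := by
    intro y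
    have he : (G h y) ^ 2 - (1 - F y) ^ 2 = (G h y - (1 - F y)) * (G h y + (1 - F y)) := by ring
    rw [Real.norm_eq_abs, he, abs_mul]
    have h1 := hGest h y
    have h2 : |G h y + (1 - F y)| ≤ A + 1 := by
      have := hGb h y
      have hu : |1 - F y| ≤ 1 := by
        rw [abs_le]; constructor <;> [linarith [hF1 y]; linarith [hF0 y]]
      calc |G h y + (1 - F y)| ≤ |G h y| + |1 - F y| := abs_add_le _ _
      _ ≤ A + 1 := by linarith
    calc |G h y - (1 - F y)| * |G h y + (1 - F y)|
        ≤ ((C * I₂) * h ^ 2) * (A + 1) := by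
          exact mul_le_mul h1 h2 (abs_nonneg _) (by positivity)
    _ = (C * I₂) * (A + 1) * h ^ 2 := by ring
  have := norm_integral_le_of_norm_le_const (μ := ν)
    (Filter.Eventually.of_forall hbound)
  rw [probReal_univ, mul_one] at this
  calc ‖∫ y, ((G h y) ^ 2 - (1 - F y) ^ 2) ∂ν‖ ≤ (C * I₂) * (A + 1) * h ^ 2 := this
  _ = (C * I₂) * (A + 1) * ‖h ^ 2‖ := by
      rw [Real.norm_eq_abs, abs_of_nonneg (sq_nonneg h)]
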